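/- Let A ⊆ ℝ be an open invex set with respect to η : A × A → ℝ and a, b ∈ A with a < a + η(b,a). If f : A → ℝ is differentiable and f′ is integrable on [a, a+η(b,a)], then (f(a) + f(a+η(b,a)))/2 − (Γ(α+1)/(2 η(b,a)^α)) [J_{a+}^α f(a+η(b,a)) + J_{(a+η(b,a))−}^α f(a)] = (η(b,a)/2) ∫_0^1 [t^α − (1−t)^α] f′(a + t·η(b,a)) dt, for every α > 0. -/

import Mathlib

open MeasureTheory intervalIntegral

/-- Riemann-Liouville left fractional integral `J_{a+}^α f(x)`. -/
noncomputable def JL (α a x : ℝ) (f : ℝ → ℝ) : ℝ :=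
  (1 / Real.Gamma α) * ∫ t in a..x, (x - t) ^ (α - 1) * f t

/-- Riemann-Liouville right fractional integral `J_{b-}^α f(x)`. -/
noncomputable def JR (α x b : ℝ) (f : ℝ → ℝ) : ℝ :=
  (1 / Real.Gamma α) * ∫ t in x..b, (t - x) ^ (α - 1) * f t

/-- `A` is invex with respect to `η`. -/
def InvexSet (A : Set ℝ) (η : ℝ → ℝ → ℝ) : Prop :=
  ∀ x ∈ A, ∀ y ∈ A, ∀ t ∈ Set.Icc (0:ℝ) 1, x + t * η y x ∈ A

/-- `f` is preinvex with respect to `η` on `A`. -/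
def PreinvexOn (A : Set ℝ) (η : ℝ → ℝ → ℝ) (f : ℝ → ℝ) : Prop :=
  ∀ x ∈ A, ∀ y ∈ A, ∀ t ∈ Set.Icc (0:ℝ) 1,
    f (x + t * η y x) ≤ (1 - t) * f x + t * f y

/-- Condition C of Mohan and Neogy. -/
def CondC (A : Set ℝ) (η : ℝ → ℝ → ℝ) : Prop :=
  ∀ x ∈ A, ∀ y ∈ A, ∀ t ∈ Set.Icc (0:ℝ) 1,
    η y (y + t * η x y) = -t * η x y ∧ η x (y + t * η x y) = (1 - t) * η x y

theorem fractional_identity_preinvex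
    (A : Set ℝ) (η : ℝ → ℝ → ℝ) (a b : ℝ) (f : ℝ → ℝ) (α : ℝ)
    (hA : IsOpen A) (hinv : InvexSet A η) (ha : a ∈ A) (hb : b ∈ A)
    (hab : a < a + η b a)
    (hdiff : ∀ x ∈ A, DifferentiableAt ℝ f x)
    (hint : IntervalIntegrable (deriv f) volume a (a + η b a))
    (hα : 0 < α) :
    (f a + f (a + η b a)) / 2 -
        Real.Gamma (α + 1) / (2 * (η b a) ^ α) *
          (JL α a (a + η b a) f + JR α a (a + η b a) f) =
      η b a / 2 *
        ∫ t in (0:ℝ)..1, (t ^ α - (1 - t) ^ α) * deriv f (a + t * η b a) := by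
  set h : ℝ := η b a with hh_def
  have hh : 0 < h := by linarith
  -- membership of the segment in A
  have hmem : ∀ t ∈ Set.Icc (0:ℝ) 1, a + t * h ∈ A := fun t ht => hinv a ha b hb t ht
  -- continuity of F t = f (a + t*h) on [[0,1]]
  have hcontF : ContinuousOn (fun t => f (a + t * h)) (Set.uIcc (0:ℝ) 1) := by
    rw [Set.uIcc_of_le (by norm_num : (0:ℝ) ≤ 1)]
    intro t ht
    have hc : ContinuousAt (fun s : ℝ => f (a + s * h)) t :=
      ContinuousAt.comp (g := f) (f := fun s : ℝ => a + s * h) (x := t)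
        (hdiff _ (hmem t ht)).continuousAt (by fun_prop)
    exact hc.continuousWithinAt
  -- integrability of D t = deriv f (a + t*h)
  have hD : IntervalIntegrable (fun t => deriv f (a + t * h)) volume 0 1 := by
    have h1 := (hint.comp_add_left a).comp_mul_left (c := h)
    simp only [add_sub_cancel_left, sub_self, zero_div, div_self hh.ne'] at h1
    simpa [mul_comm] using h1
  have hcontα : Continuous (fun t : ℝ => t ^ α) := Real.continuous_rpow_const hα.le
  have hcont1α : Continuous (fun t : ℝ => (1 - t) ^ α) :=
    hcontα.comp (continuous_const.sub continuous_id)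
  -- integrability pieces
  have hK1 : IntervalIntegrable (fun t => t ^ α * deriv f (a + t * h)) volume 0 1 :=
    hD.continuousOn_mul hcontα.continuousOn
  have hK2 : IntervalIntegrable (fun t => (1 - t) ^ α * deriv f (a + t * h)) volume 0 1 :=
    hD.continuousOn_mul hcont1α.continuousOn
  have hI1 : IntervalIntegrable (fun t => t ^ (α - 1) * f (a + t * h)) volume 0 1 :=
    (intervalIntegrable_rpow' (by linarith)).mul_continuousOn hcontF
  have hI2 : IntervalIntegrable (fun t => (1 - t) ^ (α - 1) * f (a + t * h)) volume 0 1 := by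
    have h2 := ((intervalIntegrable_rpow' (a := 0) (b := 1)
      (by linarith : (-1:ℝ) < α - 1)).comp_sub_left 1).symm
    have h3 : IntervalIntegrable (fun t : ℝ => (1 - t) ^ (α - 1)) volume 0 1 := by
      simpa using h2
    exact h3.mul_continuousOn hcontF
  -- derivative of F
  have hF' : ∀ t ∈ Set.Icc (0:ℝ) 1,
      HasDerivAt (fun s : ℝ => f (a + s * h)) (deriv f (a + t * h) * h) t := by
    intro t ht
    have inner : HasDerivAt (fun s : ℝ => a + s * h) h t := by
      simpa using ((hasDerivAt_id t).mul_const h).const_add a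
    exact (hdiff _ (hmem t ht)).hasDerivAt.comp t inner
  set I1 := ∫ t in (0:ℝ)..1, t ^ (α - 1) * f (a + t * h) with hI1_def
  set I2 := ∫ t in (0:ℝ)..1, (1 - t) ^ (α - 1) * f (a + t * h) with hI2_def
  set K1 := ∫ t in (0:ℝ)..1, t ^ α * deriv f (a + t * h) with hK1_def
  set K2 := ∫ t in (0:ℝ)..1, (1 - t) ^ α * deriv f (a + t * h) with hK2_def
  -- first FTC identity
  have E1 : α * I1 + K1 * h = f (a + h) := by
    have ftc := integral_eq_sub_of_hasDeriv_right_of_le (f := fun t => t ^ α * f (a + t * h))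
      (f' := fun t => α * (t ^ (α - 1) * f (a + t * h)) + t ^ α * deriv f (a + t * h) * h)
      (by norm_num : (0:ℝ) ≤ 1)
      (by
        apply ContinuousOn.mul (hcontα.continuousOn)
        rw [← Set.uIcc_of_le (by norm_num : (0:ℝ) ≤ 1)]
        exact hcontF)
      (by
        intro t ht
        have h1 : HasDerivAt (fun s : ℝ => s ^ α) (α * t ^ (α - 1)) t :=
          Real.hasDerivAt_rpow_const (Or.inl ht.1.ne')
        have h2 := h1.mul (hF' t (Set.mem_Icc_of_Ioo ht))
        have h3 : HasDerivAt (fun s : ℝ => s ^ α * f (a + s * h))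
            (α * (t ^ (α - 1) * f (a + t * h)) + t ^ α * deriv f (a + t * h) * h) t := by
          exact h2.congr_deriv (by ring)
        exact h3.hasDerivWithinAt)
      ((hI1.const_mul α).add (hK1.mul_const h))
    rw [intervalIntegral.integral_add (hI1.const_mul α) (hK1.mul_const h),
      intervalIntegral.integral_const_mul, intervalIntegral.integral_mul_const] at ftc
    rw [← hI1_def, ← hK1_def] at ftc
    rw [ftc]
    simp [Real.zero_rpow hα.ne', Real.one_rpow]
  -- second FTC identity
  have E2 : -(α * I2) + K2 * h = -(f a) := by
    have ftc := integral_eq_sub_of_hasDeriv_right_of_le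
      (f := fun t => (1 - t) ^ α * f (a + t * h))
      (f' := fun t => -(α * ((1 - t) ^ (α - 1) * f (a + t * h))) +
        (1 - t) ^ α * deriv f (a + t * h) * h)
      (by norm_num : (0:ℝ) ≤ 1)
      (by
        apply ContinuousOn.mul (hcont1α.continuousOn)
        rw [← Set.uIcc_of_le (by norm_num : (0:ℝ) ≤ 1)]
        exact hcontF)
      (by
        intro t ht
        have h0 : HasDerivAt (fun s : ℝ => (1:ℝ) - s) (-1) t := by
          simpa using (hasDerivAt_id t).const_sub 1
        have h1 : HasDerivAt (fun s : ℝ => (1 - s) ^ α) (α * (1 - t) ^ (α - 1) * (-1)) t :=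
          (Real.hasDerivAt_rpow_const (p := α)
            (Or.inl (by have := ht.2; intro hc; rw [sub_eq_zero] at hc; linarith))).comp t h0
        have h2 := h1.mul (hF' t (Set.mem_Icc_of_Ioo ht))
        have h3 : HasDerivAt (fun s : ℝ => (1 - s) ^ α * f (a + s * h))
            (-(α * ((1 - t) ^ (α - 1) * f (a + t * h))) +
              (1 - t) ^ α * deriv f (a + t * h) * h) t := by
          exact h2.congr_deriv (by ring)
        exact h3.hasDerivWithinAt)
      (by
        have hI2n : IntervalIntegrable
            (fun t : ℝ => -(α * ((1 - t) ^ (α - 1) * f (a + t * h)))) volume 0 1 :=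
          (hI2.const_mul α).neg
        exact hI2n.add (hK2.mul_const h))
    have hI2n : IntervalIntegrable
        (fun t : ℝ => -(α * ((1 - t) ^ (α - 1) * f (a + t * h)))) volume 0 1 :=
      (hI2.const_mul α).neg
    rw [intervalIntegral.integral_add hI2n (hK2.mul_const h),
      intervalIntegral.integral_neg, intervalIntegral.integral_const_mul,
      intervalIntegral.integral_mul_const] at ftc
    rw [← hI2_def, ← hK2_def] at ftc
    rw [ftc]
    simp [Real.zero_rpow hα.ne', Real.one_rpow]
  -- substitution for JR
  have S1 : (∫ u in a..(a + h), (u - a) ^ (α - 1) * f u) = h ^ α * I1 := by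
    have key := intervalIntegral.mul_integral_comp_add_mul (a := 0) (b := 1)
      (f := fun u => (u - a) ^ (α - 1) * f u) h a
    simp only [mul_zero, mul_one, add_zero] at key
    rw [← key]
    have congr1 : ∀ t ∈ Set.uIcc (0:ℝ) 1,
        (a + h * t - a) ^ (α - 1) * f (a + h * t)
          = h ^ (α - 1) * (t ^ (α - 1) * f (a + t * h)) := by
      intro t ht
      rw [Set.uIcc_of_le (by norm_num : (0:ℝ) ≤ 1)] at ht
      rw [add_sub_cancel_left, Real.mul_rpow hh.le ht.1, mul_comm h t]
      ring
    rw [intervalIntegral.integral_congr congr1, intervalIntegral.integral_const_mul,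
      ← hI1_def, show α = (α - 1) + 1 by ring, Real.rpow_add_one hh.ne']
    ring
  -- substitution for JL
  have S2 : (∫ u in a..(a + h), (a + h - u) ^ (α - 1) * f u) = h ^ α * I2 := by
    have key := intervalIntegral.mul_integral_comp_add_mul (a := 0) (b := 1)
      (f := fun u => (a + h - u) ^ (α - 1) * f u) h a
    simp only [mul_zero, mul_one, add_zero] at key
    rw [← key]
    have congr1 : ∀ t ∈ Set.uIcc (0:ℝ) 1,
        (a + h - (a + h * t)) ^ (α - 1) * f (a + h * t)
          = h ^ (α - 1) * ((1 - t) ^ (α - 1) * f (a + t * h)) := by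
      intro t ht
      rw [Set.uIcc_of_le (by norm_num : (0:ℝ) ≤ 1)] at ht
      rw [show a + h - (a + h * t) = h * (1 - t) by ring,
        Real.mul_rpow hh.le (by linarith [ht.2]), mul_comm h t]
      ring
    rw [intervalIntegral.integral_congr congr1, intervalIntegral.integral_const_mul,
      ← hI2_def, show α = (α - 1) + 1 by ring, Real.rpow_add_one hh.ne']
    ring
  -- split the right-hand integral
  have RHSsplit : (∫ t in (0:ℝ)..1, (t ^ α - (1 - t) ^ α) * deriv f (a + t * h))
      = K1 - K2 := by
    have congr2 : ∀ t ∈ Set.uIcc (0:ℝ) 1,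
        (t ^ α - (1 - t) ^ α) * deriv f (a + t * h)
          = t ^ α * deriv f (a + t * h) - (1 - t) ^ α * deriv f (a + t * h) := by
      intro t _; ring
    rw [intervalIntegral.integral_congr congr2, intervalIntegral.integral_sub hK1 hK2]
  -- final assembly
  have hΓ : Real.Gamma (α + 1) = α * Real.Gamma α := Real.Gamma_add_one hα.ne'
  have hΓpos : 0 < Real.Gamma α := Real.Gamma_pos_of_pos hα
  have hpow : (0:ℝ) < h ^ α := Real.rpow_pos_of_pos hh α
  rw [RHSsplit, hΓ]
  unfold JL JR
  rw [S1, S2]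
  have h1 : Real.Gamma α ≠ 0 := hΓpos.ne'
  have h2 : h ^ α ≠ 0 := hpow.ne'
  field_simp
  linear_combination (-1) * E1 + E2
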